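/- For every χ ∈ W with lowest index m and admissible set D_{m+1}: ‖1_T Â⁺ 1_{T^∁} χ‖ ≤ ‖1_{D_{m+1}×ℝ³} Â⁺_m χ_m‖_{L²} < ∞. In particular W ⊆ V. -/

import Mathlib

open MeasureTheory ENNReal

noncomputable section

/-- Momentum space `ℝ³`. -/
abbrev R3 : Type := EuclideanSpace ℝ (Fin 3)

/-- `pfun k = p_{n+1}(k₁,…,k_n) = e^{n+1} ∏_{i=1}^{n} (|k_i|² + 1)²` for `k : Fin n → ℝ³`. -/
def pfun {n : ℕ} (k : Fin n → R3) : ℝ :=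
  Real.exp (n + 1) * ∏ i, (‖k i‖ ^ 2 + 1) ^ 2

/-- `Eset n = E_{n+1} ⊆ (ℝ³)^{n+1}`:
`exp(p_{n+1}(k₁,…,k_n)/2) < |k_{n+1}| < exp(p_{n+1}(k₁,…,k_n))`. -/
def Eset (n : ℕ) : Set (Fin (n + 1) → R3) :=
  {k | Real.exp (pfun (fun i : Fin n => k i.castSucc) / 2) < ‖k (Fin.last n)‖ ∧
       ‖k (Fin.last n)‖ < Real.exp (pfun (fun i : Fin n => k i.castSucc))}

/-- The symmetrizer `𝒮` on subsets of `(ℝ³)^n`: all tuples having a permutation in `X`. -/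
def symmSet {n : ℕ} (X : Set (Fin n → R3)) : Set (Fin n → R3) :=
  {k | ∃ σ : Equiv.Perm (Fin n), (k ∘ σ) ∈ X}

/-- `extendSet X = X × ℝ³ ⊆ (ℝ³)^{n+1}` for `X ⊆ (ℝ³)^n`. -/
def extendSet {n : ℕ} (X : Set (Fin n → R3)) : Set (Fin (n + 1) → R3) :=
  {k | (fun i : Fin n => k i.castSucc) ∈ X}

/-- `Fset n = F_{n+1}`: `F₁ = ∅`, `F_{n} = 𝒮((F_{n−1}^∁ × ℝ³) ∩ E_n)`. -/
def Fset : (n : ℕ) → Set (Fin (n + 1) → R3)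
  | 0 => ∅
  | n + 1 => symmSet (extendSet (Fset n)ᶜ ∩ Eset (n + 1))

/-- A representative of a vector of the Fock space: component `n` is a function of
`(k₁,…,k_n; p)`, i.e. of `n + 1` points of `ℝ³`. -/
abbrev FockRep : Type := (n : ℕ) → (Fin (n + 1) → R3) → ℂ

/-- Remove the `i`-th entry of a tuple. -/
def removeAt {n : ℕ} (i : Fin (n + 1)) (f : Fin (n + 1) → R3) : Fin n → R3 :=
  fun j => f (i.succAbove j)

/-- `Â⁺_m` : `(Â⁺_m ψ)(k₁,…,k_{m+1};p) = (m+1)^{-1/2} ∑_i |k_i|^{-1/2} ψ(…,k̂_i,…; p + k_i)`. -/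
def Aplus (m : ℕ) (ψ : (Fin (m + 1) → R3) → ℂ) : (Fin (m + 2) → R3) → ℂ :=
  fun x =>
    (Real.sqrt (m + 1) : ℂ)⁻¹ *
      ∑ i : Fin (m + 1),
        (Real.sqrt ‖x i.castSucc‖ : ℂ)⁻¹ *
          ψ (Fin.snoc (removeAt i fun j : Fin (m + 1) => x j.castSucc)
              (x (Fin.last (m + 1)) + x i.castSucc))

/-- `Aminus t = Â⁻_{t+1}` : the full annihilation-type operator. -/
def Aminus (t : ℕ) (ψ : (Fin (t + 2) → R3) → ℂ) : (Fin (t + 1) → R3) → ℂ :=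
  fun x =>
    (Real.sqrt (t + 1) : ℂ)⁻¹ *
      ∑ i : Fin (t + 1),
        ∫ w : R3, (Real.sqrt ‖w‖ : ℂ)⁻¹ *
          ψ (Fin.snoc (Fin.insertNth i w fun j : Fin t => x j.castSucc)
              (x (Fin.last t) - w))

/-- `AminusL t l = Â⁻_{t+1, l}` : the single term of `Â⁻_{t+1}` where the integration
variable is inserted at position `l`. -/
def AminusL (t : ℕ) (l : Fin (t + 1)) (ψ : (Fin (t + 2) → R3) → ℂ) :
    (Fin (t + 1) → R3) → ℂ :=
  fun x =>
    (Real.sqrt (t + 1) : ℂ)⁻¹ *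
      ∫ w : R3, (Real.sqrt ‖w‖ : ℂ)⁻¹ *
        ψ (Fin.snoc (Fin.insertNth l w fun j : Fin t => x j.castSucc)
            (x (Fin.last t) - w))

/-- `Â⁻_m χ_m`, with `Â⁻₀ := 0`. -/
def AminusComp : (m : ℕ) → ((Fin (m + 1) → R3) → ℂ) → (Fin m → R3) → ℂ
  | 0, _ => 0
  | t + 1, ψ => Aminus t ψ

/-- The full (formal) operator `Â` : `(Âψ)_n = Â⁺_{n−1}ψ_{n−1} + Â⁻_{n+1}ψ_{n+1}`,
with `Â⁺_{−1} := 0`. -/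
def Aop (ψ : FockRep) : FockRep := fun n =>
  match n with
  | 0 => Aminus 0 (ψ 1)
  | n + 1 => fun x => Aplus n (ψ n) x + Aminus (n + 1) (ψ (n + 2)) x

/-- `Tset n` is the set whose indicator gives `1_T` on component `n`:
`∅` for `n = 0` and `F_n × ℝ³` for `n ≥ 1`. -/
def Tset : (n : ℕ) → Set (Fin (n + 1) → R3)
  | 0 => ∅
  | n + 1 => extendSet (Fset n)

/-- The operator `1_T`. -/
def oneT (ψ : FockRep) : FockRep := fun n => (Tset n).indicator (ψ n)

/-- The operator `1_{T^∁}`. -/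
def oneTc (ψ : FockRep) : FockRep := fun n => ((Tset n)ᶜ).indicator (ψ n)

/-- The operator `Â⁺`: `(Â⁺ψ)_n = Â⁺_{n−1}ψ_{n−1}`, `(Â⁺ψ)₀ = 0`. -/
def AplusOp (ψ : FockRep) : FockRep := fun n =>
  match n with
  | 0 => 0
  | n + 1 => Aplus n (ψ n)

/-- `‖ψ‖² = ∑_n ‖ψ_n‖²_{L²}` (in `ℝ≥0∞`). -/
def HnormSq (ψ : FockRep) : ℝ≥0∞ := ∑' n, eLpNorm (ψ n) 2 volume ^ 2

/-- Membership in the Hilbert space `H`. -/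
def memH (ψ : FockRep) : Prop := (∀ n, MemLp (ψ n) 2 volume) ∧ HnormSq ψ < ⊤

/-- `‖1_T Â⁺ 1_{T^∁} ψ‖²`. -/
def VnormSq (ψ : FockRep) : ℝ≥0∞ := HnormSq (oneT (AplusOp (oneTc ψ)))

/-- `ψ ∈ U`, i.e. `ψ ∈ H` and `Âψ ∈ H`. -/
def memU (ψ : FockRep) : Prop := memH ψ ∧ memH (Aop ψ)

/-- `ψ ∈ V`, i.e. `ψ ∈ H` and `‖1_T Â⁺ 1_{T^∁} ψ‖ < ∞`. -/
def memV (ψ : FockRep) : Prop := memH ψ ∧ VnormSq ψ < ⊤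

/-- The inner product of `H` (conjugate-linear in the first argument). -/
def Hinner (φ ψ : FockRep) : ℂ := ∑' n, ∫ x, (starRingEnd ℂ) (φ n x) * ψ n x

/-- `‖φ − ψ‖²`. -/
def distSq (φ ψ : FockRep) : ℝ≥0∞ :=
  ∑' n, eLpNorm (fun x => φ n x - ψ n x) 2 volume ^ 2

/-- `χ_{n,j}` for `n = t + 2`: the `j`-th term of the recursion formula defining members
of `W` in terms of `prev = χ_{n−2}`, with vanishing-set `Dset = D_{n−1}`. -/
def chiTerm (t : ℕ) (Dset : Set (Fin (t + 1) → R3)) (prev : (Fin (t + 1) → R3) → ℂ)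
    (j : Fin (t + 1)) : (Fin (t + 3) → R3) → ℂ :=
  fun x =>
    let kk : Fin (t + 2) → R3 := fun i => x i.castSucc
    let p : R3 := x (Fin.last (t + 2))
    let kf : Fin (t + 1) → R3 := fun i => kk i.castSucc
    let kn : R3 := kk (Fin.last (t + 1))
    (((-Real.sqrt (t + 2) * (Eset (t + 1)).indicator (fun _ => (1 : ℝ)) kk *
          Dsetᶜ.indicator (fun _ => (1 : ℝ)) kf) /
        (2 * Real.pi * Real.sqrt (t + 1) * pfun kf * Real.sqrt (‖kn‖ ^ 5)) : ℝ) : ℂ) *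
      ((Real.sqrt ‖kf j‖ : ℂ)⁻¹ * prev (Fin.snoc (removeAt j kf) (p + kf j + kn)))

/-- The full recursion formula `χ_n = ∑_{j=1}^{n−1} χ_{n,j}` for `n = t + 2`. -/
def chiFormula (t : ℕ) (Dset : Set (Fin (t + 1) → R3)) (prev : (Fin (t + 1) → R3) → ℂ) :
    (Fin (t + 3) → R3) → ℂ :=
  fun x => ∑ j : Fin (t + 1), chiTerm t Dset prev j x

/-- `χ ∈ W`, with lowest index `m` and admissible set `D = D_{m+1}`. -/
def IsW (m : ℕ) (D : Set (Fin (m + 1) → R3)) (χ : FockRep) : Prop :=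
  memH χ ∧
  Fset m ⊆ D ∧ symmSet D = D ∧
  (∀ n, (¬ ∃ j : ℕ, n = m + 2 * j) → χ n = 0) ∧
  χ (m + 2) = chiFormula m D (χ m) ∧
  (∀ j : ℕ, χ (m + 2 * j + 4) = chiFormula (m + 2 * j + 2) ∅ (χ (m + 2 * j + 2))) ∧
  MemLp (AminusComp m (χ m)) 2 volume ∧
  MemLp ((extendSet D).indicator (Aplus m (χ m))) 2 volume

/-- Membership in the linear span of `W`. -/
def inSpanW (φ : FockRep) : Prop :=
  ∃ (k : ℕ) (c : Fin k → ℂ) (χs : Fin k → FockRep),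
    (∀ i, ∃ (m : ℕ) (D : Set (Fin (m + 1) → R3)), IsW m D (χs i)) ∧
    ∀ n x, φ n x = ∑ i, c i * χs i n x

/-- The shell `B_R ∖ B_{1/R} ⊆ ℝ³`. -/
def shellSet (R : ℝ) : Set R3 := {k | R⁻¹ ≤ ‖k‖ ∧ ‖k‖ < R}

/-- `(B_R ∖ B_{1/R})^n × ℝ³` as a subset of `(ℝ³)^{n+1}`. -/
def cutSet (R : ℝ) (n : ℕ) : Set (Fin (n + 1) → R3) :=
  {x | ∀ i : Fin n, x i.castSucc ∈ shellSet R}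

/-- The cut-off creation operator `Â^{R+}_m`. -/
def ARplus (R : ℝ) (m : ℕ) (ψ : (Fin (m + 1) → R3) → ℂ) : (Fin (m + 2) → R3) → ℂ :=
  (cutSet R (m + 1)).indicator (Aplus m ψ)

/-- The cut-off annihilation operator `Â^{R−}_{t+1}`. -/
def ARminus (R : ℝ) (t : ℕ) (ψ : (Fin (t + 2) → R3) → ℂ) : (Fin (t + 1) → R3) → ℂ :=
  (cutSet R t).indicator (Aminus t ((cutSet R (t + 1)).indicator ψ))

/-- `p'_{N+1}(i₁,…,i_N) = e^{N+1} ∏_l (i_l² + 1)²`. -/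
def pIdx (N : ℕ) (i : Fin N → ℕ) : ℝ :=
  Real.exp (N + 1) * ∏ l, ((i l : ℝ) ^ 2 + 1) ^ 2

/-- `X_{N,i} × ℝ³`: the product of spherical shells `i_l ≤ |k_l| < i_l + 1`
in the `k`-variables, with `p` free. -/
def Xshell (N : ℕ) (i : Fin N → ℕ) : Set (Fin (N + 1) → R3) :=
  {x | ∀ l : Fin N, (i l : ℝ) ≤ ‖x l.castSucc‖ ∧ ‖x l.castSucc‖ < (i l : ℝ) + 1}


section Helpers

lemma one_le_factor (v : R3) : 1 ≤ (‖v‖ ^ 2 + 1) ^ 2 := by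
  nlinarith [sq_nonneg (‖v‖), sq_nonneg (‖v‖^2 + 1)]

lemma one_le_prod_real {ι : Type*} (s : Finset ι) (F : ι → ℝ) (h : ∀ i ∈ s, 1 ≤ F i) :
    1 ≤ ∏ i ∈ s, F i := by
  have := Finset.prod_le_prod (s := s) (f := fun _ => (1:ℝ)) (g := F)
    (fun i _ => zero_le_one) (fun i hi => h i hi)
  simpa using this

lemma prod_nonneg_real {ι : Type*} (s : Finset ι) (F : ι → ℝ) (h : ∀ i ∈ s, 0 ≤ F i) :
    0 ≤ ∏ i ∈ s, F i := Finset.prod_nonneg h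

lemma prod_subset_le_real {ι : Type*} [DecidableEq ι] (s t : Finset ι) (F : ι → ℝ)
    (hsub : s ⊆ t) (h1 : ∀ i ∈ t, 1 ≤ F i) : ∏ i ∈ s, F i ≤ ∏ i ∈ t, F i := by
  rw [← Finset.prod_sdiff hsub]
  have h2 : 1 ≤ ∏ i ∈ t \ s, F i :=
    one_le_prod_real _ _ (fun i hi => h1 i (Finset.mem_sdiff.1 hi).1)
  have h3 : 0 ≤ ∏ i ∈ s, F i :=
    prod_nonneg_real _ _ (fun i hi => le_trans zero_le_one (h1 i (hsub hi)))
  nlinarith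

lemma pfun_pos {n : ℕ} (a : Fin n → R3) : 0 < pfun a := by
  unfold pfun
  apply mul_pos (Real.exp_pos _)
  apply Finset.prod_pos
  intro i _
  positivity

lemma pfun_factor_le {n : ℕ} (a : Fin n → R3) (j : Fin n) :
    Real.exp 1 * (‖a j‖ ^ 2 + 1) ^ 2 ≤ pfun a := by
  unfold pfun
  apply mul_le_mul
  · exact Real.exp_le_exp.2 (by linarith [Nat.cast_nonneg (α := ℝ) n])
  · have := prod_subset_le_real {j} Finset.univ (fun i => (‖a i‖ ^ 2 + 1) ^ 2)
      (Finset.subset_univ _) (fun i _ => one_le_factor (a i))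
    simpa using this
  · positivity
  · exact (Real.exp_pos _).le

lemma two_le_exp_one : (2 : ℝ) ≤ Real.exp 1 := by
  nlinarith [Real.add_one_le_exp 1]

/-- If `e·(x²+1)² ≤ P` and `exp(P/2) < y` then `x < y`. -/
lemma norm_lt_of_pfun {x y P : ℝ} (hP : Real.exp 1 * (x ^ 2 + 1) ^ 2 ≤ P)
    (hy : Real.exp (P / 2) < y) : x < y := by
  have h1 : (2 : ℝ) ≤ Real.exp 1 := two_le_exp_one
  have h2 : x ^ 2 + 1 ≤ P / 2 := by nlinarith [sq_nonneg (x^2+1), sq_nonneg x]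
  have h3 : P / 2 + 1 ≤ Real.exp (P / 2) := by linarith [Real.add_one_le_exp (P/2)]
  nlinarith [sq_nonneg (x - 1)]

lemma prod_comp_le {s r N : ℕ} (F : Fin N → ℝ) (hF : ∀ i, 1 ≤ F i)
    (f : Fin s → Fin N) (g : Fin r → Fin N) (hf : Function.Injective f)
    (hg : Function.Injective g) (hrange : Set.range f ⊆ Set.range g) :
    ∏ j, F (f j) ≤ ∏ j, F (g j) := by
  rw [← Finset.prod_image (fun a _ b _ hab => hf hab),
      ← Finset.prod_image (fun a _ b _ hab => hg hab)]
  apply prod_subset_le_real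
  · intro i hi
    simp only [Finset.mem_image, Finset.mem_univ, true_and] at hi ⊢
    obtain ⟨j, hj⟩ := hi
    obtain ⟨j', hj'⟩ := hrange ⟨j, hj⟩
    exact ⟨j', hj'⟩
  · intro i _; exact hF i

lemma pfun_comp_le {s r N : ℕ} (k : Fin N → R3) (f : Fin s → Fin N) (g : Fin r → Fin N)
    (hf : Function.Injective f) (hg : Function.Injective g)
    (hrange : Set.range f ⊆ Set.range g) (hsr : s ≤ r) :
    pfun (k ∘ f) ≤ pfun (k ∘ g) := by
  unfold pfun
  have h1 := prod_comp_le (fun i => (‖k i‖ ^ 2 + 1) ^ 2) (fun i => one_le_factor (k i))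
    f g hf hg hrange
  apply mul_le_mul
  · apply Real.exp_le_exp.2
    have : (s:ℝ) ≤ r := by exact_mod_cast hsr
    linarith
  · exact h1
  · exact Finset.prod_nonneg fun i _ => by positivity
  · exact (Real.exp_pos _).le

lemma two_mul_pfun_comp_le {s r N : ℕ} (k : Fin N → R3) (f : Fin s → Fin N) (g : Fin r → Fin N)
    (hf : Function.Injective f) (hg : Function.Injective g)
    (hrange : Set.range f ⊆ Set.range g) (hsr : s < r) :
    2 * pfun (k ∘ f) ≤ pfun (k ∘ g) := by
  unfold pfun
  have h1 := prod_comp_le (fun i => (‖k i‖ ^ 2 + 1) ^ 2) (fun i => one_le_factor (k i))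
    f g hf hg hrange
  have h2 : Real.exp 1 * Real.exp (s + 1) ≤ Real.exp (r + 1) := by
    rw [← Real.exp_add]
    apply Real.exp_le_exp.2
    have : (s : ℝ) + 1 ≤ r := by exact_mod_cast hsr
    linarith
  have hps : (0:ℝ) < ∏ j, (‖(k ∘ f) j‖ ^ 2 + 1) ^ 2 := by
    apply Finset.prod_pos; intro i _; positivity
  have hpr : (0:ℝ) < ∏ j, (‖(k ∘ g) j‖ ^ 2 + 1) ^ 2 := by
    apply Finset.prod_pos; intro i _; positivity
  have he := two_le_exp_one
  have hes : (0:ℝ) < Real.exp ((s:ℝ)+1) := Real.exp_pos _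
  have step1 : 2 * (Real.exp ((s:ℝ) + 1) * ∏ j, (‖(k ∘ f) j‖ ^ 2 + 1) ^ 2)
      ≤ Real.exp 1 * (Real.exp ((s:ℝ) + 1) * ∏ j, (‖(k ∘ f) j‖ ^ 2 + 1) ^ 2) := by
    apply mul_le_mul_of_nonneg_right he
    positivity
  have step2 : Real.exp 1 * (Real.exp ((s:ℝ) + 1) * ∏ j, (‖(k ∘ f) j‖ ^ 2 + 1) ^ 2)
      ≤ Real.exp 1 * (Real.exp ((s:ℝ) + 1) * ∏ j, (‖(k ∘ g) j‖ ^ 2 + 1) ^ 2) := by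
    apply mul_le_mul_of_nonneg_left _ (Real.exp_pos 1).le
    exact mul_le_mul_of_nonneg_left h1 hes.le
  have step3 : Real.exp 1 * (Real.exp ((s:ℝ) + 1) * ∏ j, (‖(k ∘ g) j‖ ^ 2 + 1) ^ 2)
      ≤ Real.exp ((r:ℝ) + 1) * ∏ j, (‖(k ∘ g) j‖ ^ 2 + 1) ^ 2 := by
    rw [← mul_assoc]
    exact mul_le_mul_of_nonneg_right h2 hpr.le
  linarith

lemma pfun_perm {n : ℕ} (a : Fin n → R3) (τ : Equiv.Perm (Fin n)) :
    pfun (a ∘ τ) = pfun a := by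
  unfold pfun
  congr 1
  exact Equiv.prod_comp τ (fun i => (‖a i‖ ^ 2 + 1) ^ 2)

lemma exists_perm_factor {n N : ℕ} (f g : Fin n → Fin N) (hf : Function.Injective f)
    (hg : Function.Injective g) (h : Set.range f = Set.range g) :
    ∃ τ : Equiv.Perm (Fin n), f = g ∘ τ := by
  have hex : ∀ j, ∃ i, g i = f j := fun j => by
    have : f j ∈ Set.range g := h ▸ Set.mem_range_self j
    exact this
  choose τ₀ hτ₀ using hex
  have hinj : Function.Injective τ₀ := by
    intro a b hab
    apply hf
    rw [← hτ₀ a, ← hτ₀ b, hab]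
  have hbij : Function.Bijective τ₀ := (Finite.injective_iff_bijective).1 hinj
  refine ⟨Equiv.ofBijective τ₀ hbij, ?_⟩
  funext j
  exact (hτ₀ j).symm

end Helpers

section SetLemmas

lemma Fset_symm_mem {t : ℕ} (k : Fin (t + 1) → R3) (τ : Equiv.Perm (Fin (t + 1)))
    (h : (k ∘ τ) ∈ Fset t) : k ∈ Fset t := by
  cases t with
  | zero => exact absurd h (by simp [Fset])
  | succ u =>
    obtain ⟨σ, hσ⟩ := h
    exact ⟨(σ.trans τ), by
      have : k ∘ (σ.trans τ) = (k ∘ τ) ∘ σ := rfl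
      rw [this]; exact hσ⟩

lemma removeAt_eq_comp {n : ℕ} (i : Fin (n + 1)) (k : Fin (n + 1) → R3) :
    removeAt i k = k ∘ i.succAbove := rfl

/-- Forward elimination for `Fset (s+1)` membership. -/
lemma mem_Fset_elim {s : ℕ} {k : Fin (s + 2) → R3} (hk : k ∈ Fset (s + 1)) :
    ∃ h : Fin (s + 2), removeAt h k ∉ Fset s ∧
      Real.exp (pfun (removeAt h k) / 2) < ‖k h‖ ∧
      ‖k h‖ < Real.exp (pfun (removeAt h k)) := by
  obtain ⟨σ, hσ1, hσ2⟩ := hk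
  set h := σ (Fin.last (s + 1)) with hh
  refine ⟨h, ?_⟩
  have hfinj : Function.Injective (fun i : Fin (s + 1) => σ i.castSucc) :=
    σ.injective.comp (Fin.castSucc_injective _)
  have hginj : Function.Injective (h.succAbove) := Fin.succAbove_right_injective
  have hrange : Set.range (fun i : Fin (s + 1) => σ i.castSucc) = Set.range h.succAbove := by
    rw [Fin.range_succAbove]
    ext x
    simp only [Set.mem_range, Set.mem_compl_iff, Set.mem_singleton_iff]
    constructor
    · rintro ⟨y, rfl⟩
      intro hc
      have := σ.injective hc
      exact (Fin.castSucc_lt_last y).ne this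
    · intro hx
      have : σ.symm x ≠ Fin.last (s + 1) := by
        intro hc
        apply hx
        have := congrArg σ hc
        rw [Equiv.apply_symm_apply] at this
        rw [this, hh]
      obtain ⟨y, hy⟩ : ∃ y : Fin (s+1), y.castSucc = σ.symm x := by
        rcases Fin.eq_castSucc_or_eq_last (σ.symm x) with ⟨y, hy⟩ | hl
        · exact ⟨y, hy.symm⟩
        · exact absurd hl this
      exact ⟨y, by rw [hy]; simp⟩
  obtain ⟨τ, hτ⟩ := exists_perm_factor _ _ hfinj hginj hrange
  have hcomp : (fun i : Fin (s + 1) => (k ∘ σ) i.castSucc) = (removeAt h k) ∘ τ := by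
    funext i
    have := congrFun hτ i
    simp only [Function.comp] at this ⊢
    rw [removeAt_eq_comp]
    simp only [Function.comp]
    rw [← this]
  constructor
  · intro hcon
    apply hσ1
    show (fun i : Fin (s + 1) => (k ∘ σ) i.castSucc) ∈ Fset s
    rw [hcomp]
    exact Fset_symm_mem _ τ⁻¹ (by
      have : (removeAt h k ∘ τ) ∘ (τ⁻¹ : Equiv.Perm (Fin (s+1))) = removeAt h k := by
        funext i; simp
      rw [this]; exact hcon)
  · have hpf : pfun (fun i : Fin (s + 1) => (k ∘ σ) i.castSucc) = pfun (removeAt h k) := by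
      rw [hcomp, pfun_perm]
    obtain ⟨hE1, hE2⟩ := hσ2
    rw [hpf] at hE1 hE2
    have hlast : (k ∘ σ) (Fin.last (s + 1)) = k h := rfl
    rw [hlast] at hE1 hE2
    exact ⟨hE1, hE2⟩

/-- Wrong direction is impossible: that's exactly the opposite; core lemma. -/
lemma core {s : ℕ} (k : Fin (s + 2) → R3) (hk : k ∈ Fset (s + 1)) (i : Fin (s + 2)) :
    removeAt i k ∉ Fset s := by
  obtain ⟨h, hh1, hh2, hh3⟩ := mem_Fset_elim hk
  by_cases hih : i = h
  · rw [hih]; exact hh1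
  · intro hmem
    cases s with
    | zero => exact absurd hmem (by simp [Fset])
    | succ s' =>
      obtain ⟨h', hh'1, hh'2, hh'3⟩ := mem_Fset_elim hmem
      set l := i.succAbove h' with hl
      have hval : (removeAt i k) h' = k l := rfl
      have hrem2 : removeAt h' (removeAt i k) = k ∘ (i.succAbove ∘ h'.succAbove) := rfl
      have hil : l ≠ i := Fin.succAbove_ne i h'
      by_cases hlh : l = h
      · -- the huge coordinate coincides: contradiction via 2Q ≤ P
        have hsub : Set.range (i.succAbove ∘ h'.succAbove) ⊆ Set.range h.succAbove := by
          rw [Fin.range_succAbove]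
          rintro x ⟨y, rfl⟩
          simp only [Set.mem_compl_iff, Set.mem_singleton_iff, Function.comp]
          intro hc
          rw [← hlh] at hc
          exact Fin.succAbove_ne h' y (Fin.succAbove_right_injective hc)
        have h2Q : 2 * pfun (k ∘ (i.succAbove ∘ h'.succAbove)) ≤ pfun (k ∘ h.succAbove) :=
          two_mul_pfun_comp_le k _ _
            (Fin.succAbove_right_injective.comp Fin.succAbove_right_injective)
            Fin.succAbove_right_injective hsub (Nat.lt_succ_self _)
        rw [← hrem2] at h2Q
        rw [← removeAt_eq_comp] at h2Q
        have hQpos := pfun_pos (removeAt h' (removeAt i k))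
        -- ‖k h‖ < exp Q ≤ exp (P/2) < ‖k h‖
        have hc1 : ‖k h‖ < Real.exp (pfun (removeAt h' (removeAt i k))) := by
          rw [← hlh]; rw [← hval]; exact hh'3
        have hc2 : Real.exp (pfun (removeAt h' (removeAt i k))) ≤
            Real.exp (pfun (removeAt h k) / 2) := Real.exp_le_exp.2 (by linarith)
        linarith
      · -- two distinct huge coordinates: contradiction via mutual domination
        -- k h appears in removeAt h' (removeAt i k)
        obtain ⟨w, hw⟩ := Fin.exists_succAbove_eq (Ne.symm hih)
        have hwh' : w ≠ h' := by
          intro hc; apply hlh; rw [hl, ← hc, hw]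
        obtain ⟨j₀, hj₀⟩ := Fin.exists_succAbove_eq hwh'
        have hfj₀ : (removeAt h' (removeAt i k)) j₀ = k h := by
          rw [hrem2]; simp only [Function.comp]; rw [hj₀, hw]
        have hQ : Real.exp 1 * (‖k h‖ ^ 2 + 1) ^ 2 ≤ pfun (removeAt h' (removeAt i k)) := by
          have := pfun_factor_le (removeAt h' (removeAt i k)) j₀
          rw [hfj₀] at this; exact this
        have hlt1 : ‖k h‖ < ‖k l‖ := norm_lt_of_pfun hQ (by rw [← hval]; exact hh'2)
        -- k l appears in removeAt h k
        obtain ⟨j₁, hj₁⟩ := Fin.exists_succAbove_eq hlh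
        have hfj₁ : (removeAt h k) j₁ = k l := by
          rw [removeAt_eq_comp]; simp only [Function.comp]; rw [hj₁]
        have hP : Real.exp 1 * (‖k l‖ ^ 2 + 1) ^ 2 ≤ pfun (removeAt h k) := by
          have := pfun_factor_le (removeAt h k) j₁
          rw [hfj₁] at this; exact this
        have hlt2 : ‖k l‖ < ‖k h‖ := norm_lt_of_pfun hP hh2
        linarith

end SetLemmas

section ChiLemmas

lemma snoc_front {n : ℕ} (a : Fin n → R3) (b : R3) :
    (fun i : Fin n => (Fin.snoc a b : Fin (n+1) → R3) i.castSucc) = a := by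
  funext i; simp

lemma chiTerm_zero_of_not_Eset {t : ℕ} (Dset : Set (Fin (t + 1) → R3))
    (prev : (Fin (t + 1) → R3) → ℂ) (j : Fin (t + 1)) (x : Fin (t + 3) → R3)
    (hx : (fun i : Fin (t + 2) => x i.castSucc) ∉ Eset (t + 1)) :
    chiTerm t Dset prev j x = 0 := by
  unfold chiTerm
  simp only
  rw [Set.indicator_of_notMem hx]
  simp

lemma chiTerm_zero_of_Dset {t : ℕ} (Dset : Set (Fin (t + 1) → R3))
    (prev : (Fin (t + 1) → R3) → ℂ) (j : Fin (t + 1)) (x : Fin (t + 3) → R3)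
    (hx : (fun i : Fin (t + 1) => x i.castSucc.castSucc) ∈ Dset) :
    chiTerm t Dset prev j x = 0 := by
  unfold chiTerm
  simp only
  rw [Set.indicator_of_notMem (Set.notMem_compl_iff.2 hx)]
  simp

lemma chiFormula_zero_of_not_Eset {t : ℕ} (Dset : Set (Fin (t + 1) → R3))
    (prev : (Fin (t + 1) → R3) → ℂ) (x : Fin (t + 3) → R3)
    (hx : (fun i : Fin (t + 2) => x i.castSucc) ∉ Eset (t + 1)) :
    chiFormula t Dset prev x = 0 :=
  Finset.sum_eq_zero fun j _ => chiTerm_zero_of_not_Eset Dset prev j x hx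

lemma chiFormula_zero_of_Dset {t : ℕ} (Dset : Set (Fin (t + 1) → R3))
    (prev : (Fin (t + 1) → R3) → ℂ) (x : Fin (t + 3) → R3)
    (hx : (fun i : Fin (t + 1) => x i.castSucc.castSucc) ∈ Dset) :
    chiFormula t Dset prev x = 0 :=
  Finset.sum_eq_zero fun j _ => chiTerm_zero_of_Dset Dset prev j x hx

lemma chiTerm_zero_of_prev {t : ℕ} (Dset : Set (Fin (t + 1) → R3))
    (prev : (Fin (t + 1) → R3) → ℂ) (j : Fin (t + 1)) (x : Fin (t + 3) → R3)
    (hx : prev (Fin.snoc (removeAt j (fun i : Fin (t+1) => x i.castSucc.castSucc))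
      (x (Fin.last (t + 2)) + x j.castSucc.castSucc + x (Fin.last (t+1)).castSucc)) = 0) :
    chiTerm t Dset prev j x = 0 := by
  unfold chiTerm
  simp only
  rw [hx]
  simp

end ChiLemmas

section MainLemmas

variable {m : ℕ} {D : Set (Fin (m + 1) → R3)} {χ : FockRep}

lemma chi_eq (h5 : χ (m + 2) = chiFormula m D (χ m))
    (h6 : ∀ j : ℕ, χ (m + 2 * j + 4) = chiFormula (m + 2 * j + 2) ∅ (χ (m + 2 * j + 2)))
    (j : ℕ) :
    ∃ D' : Set (Fin (m + 2 * j + 1) → R3),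
      χ (m + 2 * j + 2) = chiFormula (m + 2 * j) D' (χ (m + 2 * j)) := by
  cases j with
  | zero => exact ⟨D, h5⟩
  | succ j => exact ⟨∅, h6 j⟩

lemma chi_vanish (hFD : Fset m ⊆ D)
    (h5 : χ (m + 2) = chiFormula m D (χ m))
    (h6 : ∀ j : ℕ, χ (m + 2 * j + 4) = chiFormula (m + 2 * j + 2) ∅ (χ (m + 2 * j + 2))) :
    ∀ j : ℕ, ∀ y : Fin (m + 2 * j + 3) → R3,
      (fun i : Fin (m + 2 * j + 1) => y i.castSucc.castSucc) ∈ Fset (m + 2 * j) →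
      χ (m + 2 * j + 2) y = 0 := by
  intro j
  induction j with
  | zero =>
    intro y hy
    show χ (m + 2) y = 0
    rw [h5]
    exact chiFormula_zero_of_Dset D (χ m) y (hFD hy)
  | succ j ih =>
    intro y hy
    show χ (m + 2 * j + 4) y = 0
    rw [h6 j]
    apply Finset.sum_eq_zero
    intro j' _
    set kf : Fin (m + 2 * j + 3) → R3 := fun i => y i.castSucc.castSucc with hkfdef
    have hkf : kf ∈ Fset (m + 2 * j + 2) := hy
    have hzero : ∀ b : R3, χ (m + 2 * j + 2) (Fin.snoc (removeAt j' kf) b) = 0 := by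
      intro b
      set Z : Fin (m + 2 * j + 3) → R3 := Fin.snoc (removeAt j' kf) b with hZdef
      by_cases hE : removeAt j' kf ∈ Eset (m + 2 * j + 1)
      · by_cases hF : (fun i : Fin (m + 2 * j + 1) => Z i.castSucc.castSucc) ∈ Fset (m + 2 * j)
        · exact ih Z hF
        · exfalso
          apply core kf hkf j'
          show removeAt j' kf ∈ symmSet (extendSet (Fset (m + 2 * j))ᶜ ∩ Eset (m + 2 * j + 1))
          refine ⟨Equiv.refl _, ⟨?_, ?_⟩⟩
          · intro hc
            apply hF
            have heq : (fun i : Fin (m + 2 * j + 1) => Z i.castSucc.castSucc) =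
                (fun i : Fin (m + 2 * j + 1) =>
                  ((removeAt j' kf) ∘ ⇑(Equiv.refl (Fin (m + 2 * j + 2)))) i.castSucc) := by
              funext i
              show Z i.castSucc.castSucc = removeAt j' kf i.castSucc
              rw [hZdef]
              exact Fin.snoc_castSucc _ _ _
            rw [heq]
            exact hc
          · show (removeAt j' kf) ∘ ⇑(Equiv.refl (Fin (m + 2 * j + 2))) ∈ Eset (m + 2 * j + 1)
            simpa using hE
      · obtain ⟨D', hD'⟩ := chi_eq h5 h6 j
        rw [hD']
        apply chiFormula_zero_of_not_Eset
        have heq : (fun i : Fin (m + 2 * j + 2) => Z i.castSucc) = removeAt j' kf :=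
          snoc_front _ _
        rw [heq]
        exact hE
    exact chiTerm_zero_of_prev _ _ _ _ (hzero _)

lemma comp_vanish (hFD : Fset m ⊆ D)
    (h5 : χ (m + 2) = chiFormula m D (χ m))
    (h6 : ∀ j : ℕ, χ (m + 2 * j + 4) = chiFormula (m + 2 * j + 2) ∅ (χ (m + 2 * j + 2)))
    (j : ℕ) (x : Fin (m + 2 * j + 4) → R3) :
    Aplus (m + 2 * j + 2) ((Tset (m + 2 * j + 2))ᶜ.indicator (χ (m + 2 * j + 2))) x = 0 := by
  unfold Aplus
  rw [Finset.sum_eq_zero, mul_zero]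
  intro i _
  set kx : Fin (m + 2 * j + 3) → R3 := fun l => x l.castSucc with hkxdef
  set Y : Fin (m + 2 * j + 3) → R3 :=
    Fin.snoc (removeAt i kx) (x (Fin.last (m + 2 * j + 3)) + x i.castSucc) with hYdef
  suffices hzero : (Tset (m + 2 * j + 2))ᶜ.indicator (χ (m + 2 * j + 2)) Y = 0 by
    rw [hzero, mul_zero]
  by_cases hY : Y ∈ Tset (m + 2 * j + 2)
  · exact Set.indicator_of_notMem (Set.notMem_compl_iff.2 hY) _
  · rw [Set.indicator_of_mem (Set.mem_compl hY)]
    by_cases hE : removeAt i kx ∈ Eset (m + 2 * j + 1)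
    · by_cases hF : (fun l : Fin (m + 2 * j + 1) => Y l.castSucc.castSucc) ∈ Fset (m + 2 * j)
      · exact chi_vanish hFD h5 h6 j Y hF
      · exfalso
        apply hY
        show (fun l : Fin (m + 2 * j + 2) => Y l.castSucc) ∈ Fset (m + 2 * j + 1)
        have heqY : (fun l : Fin (m + 2 * j + 2) => Y l.castSucc) = removeAt i kx :=
          snoc_front _ _
        rw [heqY]
        show removeAt i kx ∈ symmSet (extendSet (Fset (m + 2 * j))ᶜ ∩ Eset (m + 2 * j + 1))
        refine ⟨Equiv.refl _, ⟨?_, ?_⟩⟩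
        · intro hc
          apply hF
          have heq : (fun l : Fin (m + 2 * j + 1) => Y l.castSucc.castSucc) =
              (fun l : Fin (m + 2 * j + 1) =>
                ((removeAt i kx) ∘ ⇑(Equiv.refl (Fin (m + 2 * j + 2)))) l.castSucc) := by
            funext l
            show Y l.castSucc.castSucc = removeAt i kx l.castSucc
            rw [hYdef]
            exact Fin.snoc_castSucc _ _ _
          rw [heq]
          exact hc
        · show (removeAt i kx) ∘ ⇑(Equiv.refl (Fin (m + 2 * j + 2))) ∈ Eset (m + 2 * j + 1)
          simpa using hE
    · obtain ⟨D', hD'⟩ := chi_eq h5 h6 j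
      rw [hD']
      apply chiFormula_zero_of_not_Eset
      have heq : (fun l : Fin (m + 2 * j + 2) => Y l.castSucc) = removeAt i kx :=
        snoc_front _ _
      rw [heq]
      exact hE

end MainLemmas

section Final

variable {m : ℕ} {D : Set (Fin (m + 1) → R3)} {χ : FockRep}

lemma Aplus_of_zero {n : ℕ} (ψ : (Fin (n + 1) → R3) → ℂ) (hψ : ∀ y, ψ y = 0)
    (x : Fin (n + 2) → R3) : Aplus n ψ x = 0 := by
  unfold Aplus
  rw [Finset.sum_eq_zero, mul_zero]
  intro i _
  rw [hψ, mul_zero]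

lemma bottom_pointwise (hFD : Fset m ⊆ D) (x : Fin (m + 2) → R3) :
    ‖(Tset (m + 1)).indicator (Aplus m ((Tset m)ᶜ.indicator (χ m))) x‖ ≤
      ‖(extendSet D).indicator (Aplus m (χ m)) x‖ := by
  by_cases hx : x ∈ Tset (m + 1)
  · have hxF : (fun i : Fin (m + 1) => x i.castSucc) ∈ Fset m := hx
    have hxD : x ∈ extendSet D := hFD hxF
    rw [Set.indicator_of_mem hx, Set.indicator_of_mem hxD]
    have heq : Aplus m ((Tset m)ᶜ.indicator (χ m)) x = Aplus m (χ m) x := by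
      unfold Aplus
      congr 1
      apply Finset.sum_congr rfl
      intro i _
      congr 1
      apply Set.indicator_of_mem
      cases m with
      | zero =>
        show _ ∈ (∅ : Set (Fin 1 → R3))ᶜ
        simp
      | succ t =>
        show Fin.snoc (removeAt i fun l : Fin (t + 2) => x l.castSucc) _ ∈
          (extendSet (Fset t))ᶜ
        intro hc
        have hc' : (fun l : Fin (t + 1) =>
            (Fin.snoc (removeAt i fun l : Fin (t + 2) => x l.castSucc)
              (x (Fin.last (t + 2)) + x i.castSucc) : Fin (t + 2) → R3) l.castSucc) ∈
            Fset t := hc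
        rw [snoc_front] at hc'
        exact core (fun l : Fin (t + 2) => x l.castSucc) hxF i hc'
    rw [heq]
  · rw [Set.indicator_of_notMem hx]
    simp

theorem statement5' (h : IsW m D χ) :
    VnormSq χ ≤ eLpNorm ((extendSet D).indicator (Aplus m (χ m))) 2 volume ^ 2 ∧
    eLpNorm ((extendSet D).indicator (Aplus m (χ m))) 2 volume ^ 2 < ⊤ ∧
    memV χ := by
  obtain ⟨hH, hFD, hsymm, h4, h5, h6, hAm, hAp⟩ := h
  have hzero : ∀ n, n ≠ m + 1 → oneT (AplusOp (oneTc χ)) n = 0 := by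
    intro n hn
    match n with
    | 0 =>
      funext x
      show Set.indicator ∅ _ x = 0
      simp
    | Nat.succ n =>
      have hnm : n ≠ m := fun hc => hn (by rw [hc])
      funext x
      show (Tset (n + 1)).indicator (Aplus n ((Tset n)ᶜ.indicator (χ n))) x = 0
      apply Set.indicator_apply_eq_zero.2
      intro _
      by_cases hbad : ∃ j, n = m + 2 * j
      · obtain ⟨j, rfl⟩ := hbad
        match j, hnm with
        | Nat.succ j', _ =>
          exact comp_vanish hFD h5 h6 j' x
        | 0, hnm => exact absurd rfl hnm
      · apply Aplus_of_zero
        intro y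
        rw [h4 n hbad]
        simp [Set.indicator]
  have hmain : VnormSq χ = eLpNorm (oneT (AplusOp (oneTc χ)) (m + 1)) 2 volume ^ 2 := by
    apply tsum_eq_single
    intro n hn
    rw [hzero n hn]
    rw [eLpNorm_zero]
    exact zero_pow two_ne_zero
  have hcomp : oneT (AplusOp (oneTc χ)) (m + 1) =
      (Tset (m + 1)).indicator (Aplus m ((Tset m)ᶜ.indicator (χ m))) := rfl
  have hle : eLpNorm (oneT (AplusOp (oneTc χ)) (m + 1)) 2 volume ≤
      eLpNorm ((extendSet D).indicator (Aplus m (χ m))) 2 volume := by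
    rw [hcomp]
    exact eLpNorm_mono (bottom_pointwise hFD)
  have hle2 : VnormSq χ ≤ eLpNorm ((extendSet D).indicator (Aplus m (χ m))) 2 volume ^ 2 := by
    rw [hmain]
    exact pow_le_pow_left' hle 2
  have hfin : eLpNorm ((extendSet D).indicator (Aplus m (χ m))) 2 volume ^ 2 < ⊤ :=
    ENNReal.pow_lt_top hAp.2
  exact ⟨hle2, hfin, hH, lt_of_le_of_lt hle2 hfin⟩

end Final
/-- For every `χ ∈ W` with lowest index `m` and admissible set `D`:
`‖1_T Â⁺ 1_{T^∁} χ‖ ≤ ‖1_{D×ℝ³} Â⁺_m χ_m‖_{L²} < ∞` (stated for the squared norms).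
In particular `W ⊆ V`. -/
theorem statement5 (m : ℕ) (D : Set (Fin (m + 1) → R3)) (χ : FockRep)
    (h : IsW m D χ) :
    VnormSq χ ≤ eLpNorm ((extendSet D).indicator (Aplus m (χ m))) 2 volume ^ 2 ∧
    eLpNorm ((extendSet D).indicator (Aplus m (χ m))) 2 volume ^ 2 < ⊤ ∧
    memV χ := by
  exact statement5' h

end
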